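/- The function ρ̄(x,t) = (1+t)^{−(λ+1)/(γ+1)} · max(A − B ξ², 0)^{1/(γ−1)}, with ξ = x (1+t)^{−(λ+1)/(γ+1)} and B = (λ+1)(γ−1)/(2κγ(γ+1)), satisfies the porous medium equation ρ̄_t = κ(1+t)^λ (ρ̄^γ)_{xx} pointwise at every point (x,t) with |x| < √(A/B)·(1+t)^{(λ+1)/(γ+1)} and t > 0. -/

import Mathlib

open Topology Filter

private lemma hasDerivAt_congr_deriv {f : ℝ → ℝ} {a b x : ℝ}
    (h : HasDerivAt f a x) (hab : a = b) : HasDerivAt f b x := hab ▸ h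

theorem barenblatt_solves_PME (γ κ lam A B : ℝ)
    (hγ1 : 1 < γ) (hγ3 : γ < 3) (hκ : 0 < κ) (hlam1 : 0 < lam) (hlam2 : lam < 1)
    (hA : 0 < A) (hB : B = (lam + 1) * (γ - 1) / (2 * κ * γ * (γ + 1)))
    (ρbar : ℝ → ℝ → ℝ)
    (hρ : ∀ x t : ℝ, ρbar x t =
      (1 + t) ^ (-((lam + 1) / (γ + 1))) *
        (max (A - B * (x * (1 + t) ^ (-((lam + 1) / (γ + 1)))) ^ 2) 0) ^ (1 / (γ - 1))) :
    ∀ x t : ℝ, 0 < t → |x| < Real.sqrt (A / B) * (1 + t) ^ ((lam + 1) / (γ + 1)) →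
      deriv (fun s => ρbar x s) t =
        κ * (1 + t) ^ lam * deriv (fun x' => deriv (fun x'' => ρbar x'' t ^ γ) x') x := by
  intro x t ht hx
  set α : ℝ := (lam + 1) / (γ + 1) with hα_def
  set p : ℝ := 1 / (γ - 1) with hp_def
  have hγ0 : (0:ℝ) < γ := by linarith
  have hγm1 : (0:ℝ) < γ - 1 := by linarith
  have hγp1 : (0:ℝ) < γ + 1 := by linarith
  have hB0 : 0 < B := by
    rw [hB]; apply div_pos (by nlinarith) (by positivity)
  have hp0 : 0 < p := by rw [hp_def]; positivity
  have hp1 : (1:ℝ) ≤ p + 1 := by linarith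
  have hT : (0:ℝ) < 1 + t := by linarith
  -- key scalar identities
  have hαγ : α * (γ + 1) = lam + 1 := by rw [hα_def]; field_simp
  have hαB : α = 2 * κ * B * (p + 1) := by
    rw [hα_def, hp_def, hB]; field_simp; ring
  have hpγ : p * γ = p + 1 := by rw [hp_def]; field_simp; ring
  -- squared rpow
  have hsq : ∀ s : ℝ, 0 < 1 + s → ((1 + s) ^ (-α)) ^ 2 = (1 + s) ^ (-(2*α)) := by
    intro s hs
    rw [← Real.rpow_two, ← Real.rpow_mul hs.le]
    norm_num; ring_nf
  -- positivity at the base point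
  have hv0 : 0 < A - B * x ^ 2 * (1 + t) ^ (-(2*α)) := by
    have hx2 : x ^ 2 < (A/B) * ((1 + t) ^ α) ^ 2 := by
      have h2 : |x| ^ 2 < (Real.sqrt (A/B) * (1 + t) ^ α) ^ 2 := by
        apply pow_lt_pow_left₀ hx (abs_nonneg x)
        norm_num
      have h3 : (Real.sqrt (A/B)) ^ 2 = A / B := Real.sq_sqrt (by positivity)
      calc x ^ 2 = |x| ^ 2 := (sq_abs x).symm
        _ < (Real.sqrt (A/B) * (1 + t) ^ α) ^ 2 := h2
        _ = (A/B) * ((1 + t) ^ α) ^ 2 := by rw [mul_pow, h3]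
    have hTα2 : ((1 + t) ^ α) ^ 2 = (1 + t) ^ (2*α) := by
      rw [← Real.rpow_two, ← Real.rpow_mul hT.le]; ring_nf
    have hinv : (1 + t) ^ (-(2*α)) = ((1 + t) ^ (2*α))⁻¹ := Real.rpow_neg hT.le _
    have hTpos : 0 < (1 + t) ^ (2*α) := Real.rpow_pos_of_pos hT _
    have : B * x ^ 2 * (1 + t) ^ (-(2*α)) < A := by
      rw [hinv]
      calc B * x ^ 2 * ((1 + t) ^ (2*α))⁻¹
          < B * ((A/B) * ((1 + t) ^ α) ^ 2) * ((1 + t) ^ (2*α))⁻¹ := by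
            apply mul_lt_mul_of_pos_right _ (by positivity)
            exact mul_lt_mul_of_pos_left hx2 hB0
        _ = A := by rw [hTα2]; field_simp
    linarith
  ----------------------------------------------------------------
  -- PART 1 : time derivative
  ----------------------------------------------------------------
  have hTev : ∀ᶠ s in 𝓝 t, 0 < 1 + s := by
    filter_upwards [eventually_gt_nhds (show (-1:ℝ) < t by linarith)] with s hs
    linarith
  have hcont : ContinuousAt (fun s => A - B * x ^ 2 * (1 + s) ^ (-(2*α))) t := by
    exact continuousAt_const.sub (continuousAt_const.mul
      ((continuousAt_const.add continuousAt_id).rpow_const (Or.inl hT.ne')))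
  have hvev : ∀ᶠ s in 𝓝 t, 0 < A - B * x ^ 2 * (1 + s) ^ (-(2*α)) :=
    hcont.eventually (eventually_gt_nhds hv0)
  have hder1 : HasDerivAt (fun s : ℝ => 1 + s) 1 t := by
    simpa using (hasDerivAt_id t).const_add (1:ℝ)
  have hwt : HasDerivAt (fun s => (1 + s) ^ (-α)) (1 * -α * (1 + t) ^ (-α - 1)) t :=
    hder1.rpow_const (Or.inl hT.ne')
  have hct : HasDerivAt (fun s => (1 + s) ^ (-(2*α))) (1 * -(2*α) * (1 + t) ^ (-(2*α) - 1)) t :=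
    hder1.rpow_const (Or.inl hT.ne')
  have hvpt : HasDerivAt (fun s => (A - B * x ^ 2 * (1 + s) ^ (-(2*α))) ^ p)
      (-(B * x ^ 2 * (1 * -(2*α) * (1 + t) ^ (-(2*α) - 1))) * p *
        (A - B * x ^ 2 * (1 + t) ^ (-(2*α))) ^ (p - 1)) t :=
    ((hct.const_mul (B * x ^ 2)).const_sub A).rpow_const (Or.inl hv0.ne')
  have hgt : HasDerivAt (fun s => (1 + s) ^ (-α) * (A - B * x ^ 2 * (1 + s) ^ (-(2*α))) ^ p)
      (-(α * (1 + t) ^ (-α - 1)) * (A - B * x ^ 2 * (1 + t) ^ (-(2*α))) ^ p +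
        2 * α * B * p * x ^ 2 * ((1 + t) ^ (-α) * (1 + t) ^ (-(2*α) - 1)) *
          (A - B * x ^ 2 * (1 + t) ^ (-(2*α))) ^ (p - 1)) t := by
    refine hasDerivAt_congr_deriv (hwt.mul hvpt) ?_
    ring
  have htime_eq : (fun s => ρbar x s) =ᶠ[𝓝 t]
      (fun s => (1 + s) ^ (-α) * (A - B * x ^ 2 * (1 + s) ^ (-(2*α))) ^ p) := by
    filter_upwards [hTev, hvev] with s hs1 hs2
    have he : A - B * (x * (1 + s) ^ (-α)) ^ 2 = A - B * x ^ 2 * (1 + s) ^ (-(2*α)) := by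
      rw [mul_pow, hsq s hs1]; ring
    rw [hρ, he, max_eq_left hs2.le]
  ----------------------------------------------------------------
  -- PART 2 : spatial derivatives
  ----------------------------------------------------------------
  set S : Set ℝ := {y : ℝ | 0 < A - B * y ^ 2 * (1 + t) ^ (-(2*α))} with hS_def
  have hS : IsOpen S := by
    apply isOpen_lt continuous_const
    fun_prop
  have hxS : x ∈ S := hv0
  set G : ℝ → ℝ := fun y =>
    (1 + t) ^ ((-α) * γ) * (A - B * y ^ 2 * (1 + t) ^ (-(2*α))) ^ (p + 1) with hG_def
  set G₁ : ℝ → ℝ := fun y =>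
    (1 + t) ^ ((-α) * γ) *
      (-(2 * B * y * (1 + t) ^ (-(2*α))) * (p + 1) *
        (A - B * y ^ 2 * (1 + t) ^ (-(2*α))) ^ p) with hG₁_def
  have hGd : ∀ y : ℝ, HasDerivAt G (G₁ y) y := by
    intro y
    have h := ((((hasDerivAt_pow 2 y).const_mul B).mul_const
        ((1 + t) ^ (-(2*α)))).const_sub A).rpow_const (Or.inr hp1) |>.const_mul
        ((1 + t) ^ ((-α) * γ))
    refine hasDerivAt_congr_deriv h ?_
    rw [hG₁_def, show p + 1 - 1 = p by ring]
    push_cast; ring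
  have hev1 : ∀ᶠ x' in 𝓝 x, deriv (fun x'' => ρbar x'' t ^ γ) x' = G₁ x' := by
    filter_upwards [hS.eventually_mem hxS] with x' hx'S
    have heq : (fun x'' => ρbar x'' t ^ γ) =ᶠ[𝓝 x'] G := by
      filter_upwards [hS.eventually_mem hx'S] with y hy
      have hy' : 0 < A - B * y ^ 2 * (1 + t) ^ (-(2*α)) := hy
      have he : A - B * (y * (1 + t) ^ (-α)) ^ 2 = A - B * y ^ 2 * (1 + t) ^ (-(2*α)) := by
        rw [mul_pow, hsq t hT]; ring
      rw [hρ, he, max_eq_left hy'.le, hG_def,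
        Real.mul_rpow (Real.rpow_nonneg hT.le _) (Real.rpow_nonneg hy'.le _),
        ← Real.rpow_mul hT.le, ← Real.rpow_mul hy'.le, hpγ]
    rw [heq.deriv_eq]
    exact (hGd x').deriv
  have hvpx : HasDerivAt (fun y => (A - B * y ^ 2 * (1 + t) ^ (-(2*α))) ^ p)
      (-(B * ((2:ℕ) * x ^ (2-1)) * (1 + t) ^ (-(2*α))) * p *
        (A - B * x ^ 2 * (1 + t) ^ (-(2*α))) ^ (p - 1)) x :=
    ((((hasDerivAt_pow 2 x).const_mul B).mul_const
        ((1 + t) ^ (-(2*α)))).const_sub A).rpow_const (Or.inl hv0.ne')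
  have hG1d : HasDerivAt G₁
      ((1 + t) ^ ((-α) * γ) *
        (-(2 * B * (p + 1) * (1 + t) ^ (-(2*α))) *
            (A - B * x ^ 2 * (1 + t) ^ (-(2*α))) ^ p +
          4 * B ^ 2 * (p + 1) * p * x ^ 2 *
            ((1 + t) ^ (-(2*α)) * (1 + t) ^ (-(2*α))) *
            (A - B * x ^ 2 * (1 + t) ^ (-(2*α))) ^ (p - 1))) x := by
    have h := (((((((hasDerivAt_id x).const_mul (2 * B)).mul_const
        ((1 + t) ^ (-(2*α)))).neg).mul_const (p + 1)).mul hvpx).const_mul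
        ((1 + t) ^ ((-α) * γ)))
    refine hasDerivAt_congr_deriv h ?_
    simp only [id_eq, Pi.neg_apply]
    push_cast; ring
  ----------------------------------------------------------------
  -- put everything together
  ----------------------------------------------------------------
  rw [htime_eq.deriv_eq, hgt.deriv, Filter.EventuallyEq.deriv_eq hev1, hG1d.deriv]
  -- power identities
  have I1 : (1 + t) ^ (-α) * (1 + t) ^ (-(2*α) - 1) =
      (1 + t) ^ (-α - 1) * (1 + t) ^ (-(2*α)) := by
    rw [← Real.rpow_add hT, ← Real.rpow_add hT,
      show -α + (-(2*α) - 1) = -α - 1 + -(2*α) by ring]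
  have I2 : (1 + t) ^ lam * ((1 + t) ^ ((-α) * γ) * (1 + t) ^ (-(2*α))) =
      (1 + t) ^ (-α - 1) := by
    rw [← Real.rpow_add hT, ← Real.rpow_add hT,
      show lam + ((-α) * γ + -(2*α)) = -α - 1 by linear_combination -hαγ]
  have I3 : (1 + t) ^ lam * ((1 + t) ^ ((-α) * γ) *
      ((1 + t) ^ (-(2*α)) * (1 + t) ^ (-(2*α)))) =
      (1 + t) ^ (-α - 1) * (1 + t) ^ (-(2*α)) := by
    linear_combination ((1 + t) ^ (-(2*α))) * I2
  set P : ℝ := (A - B * x ^ 2 * (1 + t) ^ (-(2*α))) ^ p with hP_def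
  set Q : ℝ := (A - B * x ^ 2 * (1 + t) ^ (-(2*α))) ^ (p - 1) with hQ_def
  linear_combination (2*α*B*p*x^2*Q) * I1 + (2*κ*B*(p+1)*P) * I2 +
    (-(4*κ*B^2*(p+1)*p*x^2*Q)) * I3 +
    (-((1 + t) ^ (-α - 1)*P) + 2*B*p*x^2*Q*(1 + t) ^ (-α - 1)*(1 + t) ^ (-(2*α))) * hαB
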